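/- Let p be a prime, r ∈ ℕ, n ∈ ℕ₀. If each variable x_{ij} (0 ≤ i ≤ n, 1 ≤ j ≤ r) is assigned weighted degree p^i, then the multi-fold Witt multiplication polynomial M_n^{(r)} is weighted homogeneous of weighted degree r·p^n. -/

import Mathlib

open MvPolynomial Finset

namespace WittHomogAux

variable {σ τ : Type*} {R : Type*} [CommSemiring R]

lemma pow_homog {w : σ → ℕ} {φ : MvPolynomial σ R} {m : ℕ}
    (h : IsWeightedHomogeneous w φ m) (k : ℕ) :
    IsWeightedHomogeneous w (φ ^ k) (k * m) := by
  induction k with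
  | zero => simpa using isWeightedHomogeneous_one R w
  | succ k ih =>
    rw [pow_succ, Nat.succ_mul]
    exact ih.mul h

lemma bind₁_homog {w : σ → ℕ} {w' : τ → ℕ} (c : ℕ) (g : σ → MvPolynomial τ R)
    (hg : ∀ k, IsWeightedHomogeneous w' (g k) (c * w k))
    {P : MvPolynomial σ R} {m : ℕ} (hP : IsWeightedHomogeneous w P m) :
    IsWeightedHomogeneous w' (bind₁ g P) (c * m) := by
  conv_lhs => rw [P.as_sum]
  rw [map_sum]
  apply IsWeightedHomogeneous.sum
  intro d hd
  rw [bind₁_monomial]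
  have h1 := IsWeightedHomogeneous.prod d.support (fun i => g i ^ d i)
    (fun i => d i * (c * w i)) (fun i _ => pow_homog (hg i) (d i))
  have heq : ∑ i ∈ d.support, d i * (c * w i) = c * m := by
    have hm : (Finsupp.weight w) d = m := hP (mem_support_iff.mp hd)
    rw [Finsupp.weight_apply, Finsupp.sum] at hm
    rw [← hm, Finset.mul_sum]
    exact Finset.sum_congr rfl fun i _ => by simp [smul_eq_mul]; ring
  rw [heq] at h1
  simpa using (isWeightedHomogeneous_C w' _).mul h1

lemma of_map_injective {S : Type*} [CommSemiring S] (f : R →+* S) (hf : Function.Injective f)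
    {w : σ → ℕ} {φ : MvPolynomial σ R} {m : ℕ}
    (h : IsWeightedHomogeneous w (MvPolynomial.map f φ) m) :
    IsWeightedHomogeneous w φ m := by
  intro d hd
  apply h
  rw [coeff_map]
  intro h0
  exact hd (hf (by simpa using h0))

lemma witt_homog (p : ℕ) [Fact p.Prime] (n : ℕ) :
    IsWeightedHomogeneous (fun i : ℕ => p ^ i) (wittPolynomial p ℚ n) (p ^ n) := by
  rw [wittPolynomial]
  apply IsWeightedHomogeneous.sum
  intro i hi
  apply isWeightedHomogeneous_monomial
  rw [Finsupp.weight_apply, Finsupp.sum_single_index (by simp)]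
  simp only [smul_eq_mul]
  rw [← pow_add, Nat.sub_add_cancel (Nat.lt_succ_iff.mp (Finset.mem_range.mp hi))]

lemma xInTermsOfW_homog (p : ℕ) [Fact p.Prime] (n : ℕ) :
    IsWeightedHomogeneous (fun i : ℕ => p ^ i) (xInTermsOfW p ℚ n) (p ^ n) := by
  induction n using Nat.strong_induction_on with
  | _ n ih =>
    rw [xInTermsOfW_eq]
    have h1 : IsWeightedHomogeneous (fun i : ℕ => p ^ i)
        (X n - ∑ i ∈ range n, C ((p : ℚ) ^ i) * xInTermsOfW p ℚ i ^ p ^ (n - i)) (p ^ n) := by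
      rw [← mem_weightedHomogeneousSubmodule]
      apply Submodule.sub_mem
      · exact isWeightedHomogeneous_X ℚ _ n
      · rw [mem_weightedHomogeneousSubmodule]
        apply IsWeightedHomogeneous.sum
        intro i hi
        have := (isWeightedHomogeneous_C (fun i : ℕ => p ^ i) ((p : ℚ) ^ i)).mul
          (pow_homog (ih i (Finset.mem_range.mp hi)) (p ^ (n - i)))
        rwa [zero_add, ← pow_add, Nat.sub_add_cancel
          (le_of_lt (Finset.mem_range.mp hi))] at this
    simpa using h1.mul (isWeightedHomogeneous_C _ ((⅟(p : ℚ)) ^ n))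

lemma rename_homog {w : σ → ℕ} {w' : τ → ℕ} (f : σ → τ) (hw : ∀ i, w' (f i) = w i)
    {φ : MvPolynomial σ R} {m : ℕ} (h : IsWeightedHomogeneous w φ m) :
    IsWeightedHomogeneous w' (rename f φ) m := by
  have he : rename f φ = bind₁ (fun i => X (f i)) φ := by
    have := bind₁_rename (X : τ → MvPolynomial τ R) f φ
    rw [bind₁_X_left, AlgHom.id_apply] at this
    exact this
  rw [he]
  have := bind₁_homog 1 (fun i => X (f i))
    (fun k => by simpa [hw k] using isWeightedHomogeneous_X R w' (f k)) h
  simpa using this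

end WittHomogAux

open WittHomogAux

/-- If each variable `x_{ij}` is assigned the weight `p^i`, then the `n`-th component
polynomial `M_n^{(r)}` of the `r`-fold Witt vector product is weighted homogeneous of
weighted degree `r·p^n`. -/
theorem witt_mul_poly_isWeightedHomogeneous (p : ℕ) [Fact p.Prime] (r : ℕ) (hr : 0 < r)
    (n : ℕ) :
    MvPolynomial.IsWeightedHomogeneous (fun v : Fin r × ℕ => p ^ v.2)
      (wittStructureInt p (∏ j : Fin r, X j) n) (r * p ^ n) := by
  apply of_map_injective (Int.castRingHom ℚ) Int.cast_injective
  rw [map_wittStructureInt]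
  have hΦ : MvPolynomial.map (Int.castRingHom ℚ) (∏ j : Fin r, X j : MvPolynomial (Fin r) ℤ)
      = ∏ j : Fin r, X j := by
    simp [map_prod]
  rw [hΦ, wittStructureRat]
  refine bind₁_homog (w := fun i : ℕ => p ^ i) r _ ?_ (xInTermsOfW_homog p n)
  intro k
  have he : (bind₁ fun i : Fin r => rename (Prod.mk i) (wittPolynomial p ℚ k))
      (∏ j : Fin r, X j)
      = ∏ j : Fin r, rename (Prod.mk j) (wittPolynomial p ℚ k) := by
    rw [map_prod]
    simp only [bind₁_X_right]
  rw [he]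
  have hp := IsWeightedHomogeneous.prod (R := ℚ) Finset.univ
    (fun j : Fin r => rename (Prod.mk j) (wittPolynomial p ℚ k))
    (fun _ => p ^ k)
    (fun j _ => rename_homog (w' := fun v : Fin r × ℕ => p ^ v.2) (Prod.mk j) (fun _ => rfl) (witt_homog p k))
  simpa [Finset.sum_const, Finset.card_univ, mul_comm] using hp
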